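/- Let t, t' ∈ B_n be distinct bracketings of size n, and let G be a digraph whose graph algebra A(G) satisfies the bracketing identity t ≈ t'. Then G has no pleasant path of length H(t,t'), where H(t,t') = min(h(G(t)), h(G(t'))). -/

import Mathlib

namespace AssocSpec

/-- Bracketings of products `x₁ x₂ ⋯ xₙ` represented as binary trees whose
leaves, read from left to right, are the variables `x₁, …, xₙ`. -/
inductive BTree : Type
  | leaf : BTree
  | node : BTree → BTree → BTree

namespace BTree

/-- The size of a bracketing: its number of variables (leaves). -/
def size : BTree → ℕ
  | leaf => 1
  | node l r => l.size + r.size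

/-- Evaluate a bracketing in a magma `(A, op)`, the leaves taking the values
`f k, f (k+1), …` from left to right. -/
def evalFrom {A : Type*} (op : A → A → A) : BTree → (ℕ → A) → ℕ → A
  | leaf, f, k => f k
  | node l r, f, k => op (evalFrom op l f k) (evalFrom op r f (k + l.size))

/-- The term operation induced by a bracketing `t` on a magma `(A, op)`;
the `i`-th variable (0-indexed) takes the value `f i`. -/
def termOp {A : Type*} (op : A → A → A) (t : BTree) (f : ℕ → A) : A :=
  evalFrom op t f 0

/-- The depth sequence of the DFS tree `G(t)` of a bracketing `t`: the `i`-th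
entry is the depth of the `i`-th variable (0-indexed) in `G(t)`. -/
def depths : BTree → List ℕ
  | leaf => [0]
  | node l r => l.depths ++ r.depths.map (· + 1)

/-- The depth of the `i`-th variable (0-indexed) in the DFS tree `G(t)`. -/
def depth (t : BTree) (i : ℕ) : ℕ := t.depths.getD i 0

/-- The height of the DFS tree `G(t)`: the maximum depth of a variable. -/
def height (t : BTree) : ℕ := t.depths.foldr max 0

/-- The edges of the DFS tree `G(t)`, the variables being indexed from the
given offset: `(p, c)` is an edge iff `x_p` is the parent of `x_c`. -/
def edgesFrom : BTree → ℕ → List (ℕ × ℕ)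
  | leaf, _ => []
  | node l r, k => (k, k + l.size) :: (l.edgesFrom k ++ r.edgesFrom (k + l.size))

/-- The edges of the DFS tree `G(t)` (variables indexed from `0`). -/
def edges (t : BTree) : List (ℕ × ℕ) := t.edgesFrom 0

end BTree

open Classical in
/-- The operation of the graph algebra of the digraph with vertex set `V` and
edge relation `E`; `none` plays the role of `∞`. -/
noncomputable def gaOp {V : Type*} (E : V → V → Prop) :
    Option V → Option V → Option V
  | some x, some y => if E x y then some x else none
  | _, _ => none

/-- The magma `(A, op)` satisfies the bracketing identity `t ≈ t'`. -/
def Satisfies {A : Type*} (op : A → A → A) (t t' : BTree) : Prop :=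
  ∀ f : ℕ → A, BTree.termOp op t f = BTree.termOp op t' f

/-- The `n`-th member `s_n` of the associative spectrum of the magma `(A, op)`:
the number of distinct term operations induced by bracketings of size `n`. -/
noncomputable def spectrum {A : Type*} (op : A → A → A) (n : ℕ) : ℕ :=
  Set.ncard {g : (ℕ → A) → A | ∃ t : BTree, t.size = n ∧ g = BTree.termOp op t}

/-- Reachability (by a walk) in the digraph with edge relation `E`. -/
def Reach {V : Type*} (E : V → V → Prop) : V → V → Prop :=
  Relation.ReflTransGen E

/-- `u` and `v` lie in the same strongly connected component. -/
def SameSCC {V : Type*} (E : V → V → Prop) (u v : V) : Prop :=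
  Reach E u v ∧ Reach E v u

/-- The strongly connected component of `v`, as a set of vertices. -/
def scc {V : Type*} (E : V → V → Prop) (v : V) : Set V :=
  {u | SameSCC E u v}

/-- `v` lies in a nontrivial strongly connected component (one carrying at
least one edge), i.e. `v` lies on a closed walk of positive length. -/
def InNontrivialSCC {V : Type*} (E : V → V → Prop) (v : V) : Prop :=
  ∃ u, E v u ∧ Reach E u v

/-- The induced subgraph on the set `K` (with the edge relation `E`) is an
`m`-whirl: `K` is partitioned into blocks `B 0, …, B (m-1)` so that edges go
exactly from each block to the cyclically next one. -/
def IsWhirlOn {V : Type*} (E : V → V → Prop) (K : Set V) (m : ℕ) : Prop :=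
  ∃ B : ZMod m → Set V,
    (∀ i, (B i).Nonempty) ∧
    (∀ i, B i ⊆ K) ∧
    (∀ x ∈ K, ∃! i, x ∈ B i) ∧
    (∀ x ∈ K, ∀ y ∈ K, (E x y ↔ ∃ i, x ∈ B i ∧ y ∈ B (i + 1)))

/-- `p 0 → p 1 → ⋯ → p len` is a path (a walk with pairwise distinct
vertices) in the digraph with edge relation `E`. -/
def IsPath {V : Type*} (E : V → V → Prop) (len : ℕ) (p : ℕ → V) : Prop :=
  (∀ i < len, E (p i) (p (i + 1))) ∧
  (∀ i ≤ len, ∀ j ≤ len, p i = p j → i = j)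

/-- The walk `p 0 → ⋯ → p len` is pleasant: all its vertices belong to
trivial strongly connected components. -/
def IsPleasant {V : Type*} (E : V → V → Prop) (len : ℕ) (p : ℕ → V) : Prop :=
  ∀ i ≤ len, ¬ InNontrivialSCC E (p i)

/-- The connected component `K` (of an undirected graph) is complete
bipartite: it splits into two nonempty parts with edges exactly between
vertices of different parts. -/
def IsCompleteBipartiteOn {V : Type*} (E : V → V → Prop) (K : Set V) : Prop :=
  ∃ B1 B2 : Set V, B1.Nonempty ∧ B2.Nonempty ∧ B1 ∪ B2 = K ∧ B1 ∩ B2 = ∅ ∧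
    ∀ x ∈ K, ∀ y ∈ K, (E x y ↔ (x ∈ B1 ∧ y ∈ B2) ∨ (x ∈ B2 ∧ y ∈ B1))

/-- A DFS tree of size `n`: a rooted directed tree on the vertices
`x₁, …, xₙ` (here `Fin n`, the root being `0`), given by its parent function,
such that the parent of every non-root vertex precedes it and the vertex set
of the induced subtree rooted at any vertex `i` is an interval `[i, i']`.
(The parent of the root is, by convention, the root itself.) -/
structure DFSTree (n : ℕ) where
  parent : Fin n → Fin n
  parent_lt : ∀ i : Fin n, 0 < (i : ℕ) → (parent i : ℕ) < (i : ℕ)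
  parent_root : ∀ i : Fin n, (i : ℕ) = 0 → parent i = i
  interval : ∀ i j k : Fin n, i ≤ j → j ≤ k →
    (∃ a : ℕ, parent^[a] k = i) → (∃ a : ℕ, parent^[a] j = i)

/-- The depth of the vertex `i` in a DFS tree: the length of the path from
the root to `i`. -/
noncomputable def DFSTree.depth {n : ℕ} (T : DFSTree n) (i : Fin n) : ℕ :=
  sInf {k : ℕ | (T.parent^[k] i : ℕ) = 0}

/-- The height of a DFS tree: the maximum depth of a vertex. -/
noncomputable def DFSTree.height {n : ℕ} (T : DFSTree n) : ℕ :=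
  Finset.univ.sup fun i => T.depth i

/-- The vertex `i` is a leaf (childless vertex) of the DFS tree `T`. -/
def DFSTree.IsLeaf {n : ℕ} (T : DFSTree n) (i : Fin n) : Prop :=
  ∀ j : Fin n, T.parent j = i → j = i

/-- `t_h(n)`: the number of DFS trees of size `n` of height at most `h`. -/
noncomputable def tcount (h n : ℕ) : ℕ :=
  Nat.card {T : DFSTree n // T.height ≤ h}

/-- `d` is a zag sequence: `d₁ = 0`, `d₂ = 1`, and
`1 ≤ d_{i+1} ≤ d_i + 1` for all `i` (1-indexed as in the paper;
here `d : Fin n → ℕ` is 0-indexed). -/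
def IsZag {n : ℕ} (d : Fin n → ℕ) : Prop :=
  (∀ h : 0 < n, d ⟨0, h⟩ = 0) ∧
  (∀ h : 1 < n, d ⟨1, h⟩ = 1) ∧
  (∀ i : ℕ, ∀ h : i + 1 < n,
    1 ≤ d ⟨i + 1, h⟩ ∧ d ⟨i + 1, h⟩ ≤ d ⟨i, Nat.lt_of_succ_lt h⟩ + 1)

/-- `M(t,t')`: the largest `m` such that the depth sequences of the DFS trees
of the bracketings `t` and `t'` are congruent modulo `m`. -/
noncomputable def Mval (t t' : BTree) : ℕ :=
  sSup {m : ℕ | ∀ i < t.size, t.depth i ≡ t'.depth i [MOD m]}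

end AssocSpec

namespace AssocSpecAux
open AssocSpec AssocSpec.BTree

theorem size_pos (t : BTree) : 0 < t.size := by
  induction t with
  | leaf => simp [BTree.size]
  | node l r ihl ihr => simp [BTree.size]; omega

theorem length_depths (t : BTree) : t.depths.length = t.size := by
  induction t with
  | leaf => simp [BTree.size, BTree.depths]
  | node l r ihl ihr => simp [BTree.size, BTree.depths, ihl, ihr]

theorem depth_node_left (l r : BTree) {i : ℕ} (hi : i < l.size) :
    (BTree.node l r).depth i = l.depth i := by
  unfold BTree.depth
  rw [BTree.depths, List.getD_append]
  rw [length_depths]; exact hi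

theorem depth_node_right (l r : BTree) {j : ℕ} (hj : j < r.size) :
    (BTree.node l r).depth (l.size + j) = r.depth j + 1 := by
  unfold BTree.depth
  rw [BTree.depths, List.getD_append_right _ _ _ _ (by rw [length_depths]; omega)]
  rw [length_depths]
  have h1 : l.size + j - l.size = j := by omega
  rw [h1]
  have hj' : j < (r.depths.map (· + 1)).length := by simp [length_depths]; exact hj
  rw [List.getD_eq_getElem _ _ hj', List.getElem_map,
    List.getD_eq_getElem _ _ (by rw [length_depths]; exact hj)]

theorem depth_zero (t : BTree) : t.depth 0 = 0 := by
  induction t with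
  | leaf => rfl
  | node l r ihl ihr => rw [depth_node_left l r (size_pos l)]; exact ihl

theorem depth_eq_zero {t : BTree} {i : ℕ} (hi : i < t.size) (h : t.depth i = 0) : i = 0 := by
  induction t generalizing i with
  | leaf => simp [BTree.size] at hi; omega
  | node l r ihl ihr =>
    rcases lt_or_ge i l.size with hl | hl
    · exact ihl hl (by rwa [depth_node_left l r hl] at h)
    · exfalso
      have hi' : i - l.size < r.size := by simp [BTree.size] at hi; omega
      have := depth_node_right l r hi'
      rw [show l.size + (i - l.size) = i by omega] at this
      omega

theorem depth_lt_of_mem {t : BTree} {x : ℕ} (hx : x ∈ t.depths) :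
    ∃ i < t.size, t.depth i = x := by
  rw [List.mem_iff_getElem] at hx
  obtain ⟨i, hi, hix⟩ := hx
  refine ⟨i, by rwa [length_depths] at hi, ?_⟩
  rw [BTree.depth, List.getD_eq_getElem _ _ hi, hix]

theorem depth_mem {t : BTree} {i : ℕ} (hi : i < t.size) : t.depth i ∈ t.depths := by
  rw [BTree.depth, List.getD_eq_getElem _ _ (by rwa [length_depths])]
  exact List.getElem_mem _

theorem le_foldr_max {x : ℕ} : ∀ {l : List ℕ}, x ∈ l → x ≤ l.foldr max 0 := by
  intro l
  induction l with
  | nil => simp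
  | cons a s ih =>
    intro hx
    rcases List.mem_cons.1 hx with h | h
    · subst h; simp [List.foldr]
    · simp [List.foldr]; right; exact ih h

theorem foldr_max_mem : ∀ {l : List ℕ}, l ≠ [] → l.foldr max 0 ∈ l := by
  intro l
  induction l with
  | nil => simp
  | cons a s ih =>
    intro _
    rcases eq_or_ne s [] with h | h
    · subst h; simp
    · have := ih h
      simp only [List.foldr]
      rcases le_total (s.foldr max 0) a with h1 | h1
      · rw [max_eq_left h1]; exact List.mem_cons_self
      · rw [max_eq_right h1]; exact List.mem_cons_of_mem _ this

theorem depth_le_height {t : BTree} {i : ℕ} (hi : i < t.size) : t.depth i ≤ t.height :=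
  le_foldr_max (depth_mem hi)

theorem exists_depth_eq_height (t : BTree) : ∃ i < t.size, t.depth i = t.height := by
  apply depth_lt_of_mem
  apply foldr_max_mem
  have h1 := length_depths t
  have h2 := size_pos t
  intro h; rw [h] at h1; simp at h1; omega

theorem mem_edgesFrom {t : BTree} {k a b : ℕ} (h : (a, b) ∈ t.edgesFrom k) :
    ∃ i j, a = k + i ∧ b = k + j ∧ i < t.size ∧ j < t.size ∧ t.depth j = t.depth i + 1 := by
  induction t generalizing k with
  | leaf => simp [BTree.edgesFrom] at h
  | node l r ihl ihr =>
    simp only [BTree.edgesFrom, List.mem_cons, List.mem_append] at h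
    rcases h with h | h | h
    · refine ⟨0, l.size, by simp [Prod.ext_iff] at h; omega,
        by simp [Prod.ext_iff] at h; omega, by have := size_pos l; simp [BTree.size]; omega,
        by have := size_pos r; simp [BTree.size]; omega, ?_⟩
      rw [depth_zero, show l.size = l.size + 0 by omega, depth_node_right l r (size_pos r),
        depth_zero]
    · obtain ⟨i, j, ha, hb, hi, hj, hd⟩ := ihl h
      exact ⟨i, j, ha, hb, by simp [BTree.size]; omega, by simp [BTree.size]; omega,
        by rw [depth_node_left l r hi, depth_node_left l r hj]; exact hd⟩
    · obtain ⟨i, j, ha, hb, hi, hj, hd⟩ := ihr h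
      exact ⟨l.size + i, l.size + j, by omega, by omega, by simp [BTree.size]; omega,
        by simp [BTree.size]; omega,
        by rw [depth_node_right l r hi, depth_node_right l r hj]; omega⟩

open Classical in
/-- Evaluation in a graph algebra with total (some-valued) assignment. -/
theorem eval_gaOp {V : Type*} (E : V → V → Prop) (t : BTree) (g : ℕ → V) (k : ℕ) :
    BTree.evalFrom (gaOp E) t (fun i => some (g i)) k =
      if ∀ e ∈ t.edgesFrom k, E (g e.1) (g e.2) then some (g k) else none := by
  induction t generalizing k with
  | leaf => simp [BTree.evalFrom, BTree.edgesFrom]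
  | node l r ihl ihr =>
    rw [BTree.evalFrom, ihl, ihr]
    have hsplit : (∀ e ∈ (BTree.node l r).edgesFrom k, E (g e.1) (g e.2)) ↔
        (E (g k) (g (k + l.size)) ∧ (∀ e ∈ l.edgesFrom k, E (g e.1) (g e.2)) ∧
          (∀ e ∈ r.edgesFrom (k + l.size), E (g e.1) (g e.2))) := by
      constructor
      · intro h
        exact ⟨h (k, k + l.size) List.mem_cons_self,
          fun e he => h e (List.mem_cons_of_mem _ (List.mem_append_left _ he)),
          fun e he => h e (List.mem_cons_of_mem _ (List.mem_append_right _ he))⟩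
      · intro h e he
        rcases List.mem_cons.1 he with rfl | he'
        · exact h.1
        · rcases List.mem_append.1 he' with h2 | h2
          · exact h.2.1 e h2
          · exact h.2.2 e h2
    by_cases h : ∀ e ∈ (BTree.node l r).edgesFrom k, E (g e.1) (g e.2)
    · obtain ⟨h1, h2, h3⟩ := hsplit.1 h
      rw [if_pos h, if_pos h2, if_pos h3]
      simp [gaOp, h1]
    · rw [if_neg h]
      by_cases h2 : ∀ e ∈ l.edgesFrom k, E (g e.1) (g e.2)
      · rw [if_pos h2]
        by_cases h3 : ∀ e ∈ r.edgesFrom (k + l.size), E (g e.1) (g e.2)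
        · rw [if_pos h3]
          have h1 : ¬ E (g k) (g (k + l.size)) := fun h1 => h (hsplit.2 ⟨h1, h2, h3⟩)
          simp [gaOp, h1]
        · rw [if_neg h3]; rfl
      · rw [if_neg h2]
        rcases (if ∀ e ∈ r.edgesFrom (k + l.size), E (g e.1) (g e.2) then
          some (g (k + l.size)) else none) with _ | x <;> rfl

/-- If a labeling strictly increases along edges, it dominates depths. -/
theorem depth_le_of_incr {t : BTree} {g : ℕ → ℕ} {k : ℕ}
    (hg : ∀ e ∈ t.edgesFrom k, g e.1 < g e.2) :
    ∀ i < t.size, g k + t.depth i ≤ g (k + i) := by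
  induction t generalizing k with
  | leaf =>
    intro i hi
    have : i = 0 := by simpa [BTree.size] using hi
    subst this; simp [BTree.depth, BTree.depths]
  | node l r ihl ihr =>
    have hedge : g k < g (k + l.size) := hg (k, k + l.size) (by simp [BTree.edgesFrom])
    have hgl : ∀ e ∈ l.edgesFrom k, g e.1 < g e.2 := fun e he =>
      hg e (by simp [BTree.edgesFrom]; right; left; exact he)
    have hgr : ∀ e ∈ r.edgesFrom (k + l.size), g e.1 < g e.2 := fun e he =>
      hg e (by simp [BTree.edgesFrom]; right; right; exact he)
    intro i hi
    rcases lt_or_ge i l.size with hl | hl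
    · rw [depth_node_left l r hl]; exact ihl hgl i hl
    · have hj : i - l.size < r.size := by simp [BTree.size] at hi; omega
      have := ihr hgr (i - l.size) hj
      have hd := depth_node_right l r hj
      rw [show l.size + (i - l.size) = i by omega] at hd
      rw [hd]
      rw [show k + l.size + (i - l.size) = k + i by omega] at this
      omega

theorem getD_map_add_one (s : List ℕ) {n : ℕ} (hn : n < s.length) :
    (s.map (· + 1)).getD n 0 = s.getD n 0 + 1 := by
  rw [List.getD_eq_getElem _ _ (by simpa using hn), List.getElem_map,
    List.getD_eq_getElem _ _ hn]

/-- The depth sequence determines the bracketing. -/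
theorem depths_inj : ∀ {t t' : BTree}, t.depths = t'.depths → t = t' := by
  intro t
  induction t with
  | leaf =>
    intro t' h
    cases t' with
    | leaf => rfl
    | node l' r' =>
      exfalso
      have h1 := congrArg List.length h
      rw [length_depths, length_depths] at h1
      have := size_pos l'; have := size_pos r'
      simp [BTree.size] at h1; omega
  | node l r ihl ihr =>
    intro t' h
    cases t' with
    | leaf =>
      exfalso
      have h1 := congrArg List.length h
      rw [length_depths, length_depths] at h1
      have := size_pos l; have := size_pos r
      simp [BTree.size] at h1; omega
    | node l' r' =>
      have hlen := congrArg List.length h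
      rw [length_depths, length_depths] at hlen
      simp only [BTree.size] at hlen
      -- first show l.size = l'.size
      have key : ∀ (a b a' b' : BTree), a.depths ++ b.depths.map (· + 1) =
          a'.depths ++ b'.depths.map (· + 1) → a.size < a'.size → False := by
        intro a b a' b' heq hlt
        have hlen2 := congrArg List.length heq
        simp only [List.length_append, List.length_map, length_depths] at hlen2
        have hb : a'.size - a.size < b.size := by
          have := size_pos b'; omega
        have h1 : (a.depths ++ b.depths.map (· + 1)).getD a'.size 0 =
            b.depth (a'.size - a.size) + 1 := by
          rw [List.getD_append_right _ _ _ _ (by rw [length_depths]; omega), length_depths,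
            getD_map_add_one _ (by rw [length_depths]; exact hb)]
          rfl
        have h2 : (a'.depths ++ b'.depths.map (· + 1)).getD a'.size 0 = 1 := by
          rw [List.getD_append_right _ _ _ _ (by rw [length_depths]), length_depths,
            Nat.sub_self, getD_map_add_one _ (by rw [length_depths]; exact size_pos b')]
          have : b'.depths.getD 0 0 = b'.depth 0 := rfl
          rw [this, depth_zero]
        rw [heq, h2] at h1
        have : a'.size - a.size = 0 := depth_eq_zero hb (by omega)
        omega
      have hsz : l.size = l'.size := by
        rcases lt_trichotomy l.size l'.size with h1 | h1 | h1
        · exact absurd (key l r l' r' (by simpa [BTree.depths] using h) h1) (by simp)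
        · exact h1
        · exact absurd (key l' r' l r (by simpa [BTree.depths] using h.symm) h1) (by simp)
      simp only [BTree.depths] at h
      obtain ⟨h1, h2⟩ := List.append_inj h (by rw [length_depths, length_depths, hsz])
      have h3 : r.depths = r'.depths := by
        have : Function.Injective (List.map (· + 1 : ℕ → ℕ)) :=
          List.map_injective_iff.2 (fun a b => by omega)
        exact this h2
      rw [ihl h1, ihr h3]


/-- Key step: if the graph algebra identity holds and there is a pleasant
walk of length at least `t.height`, then the depths of `t'` are dominated
by those of `t`. -/
theorem key {V : Type*} (E : V → V → Prop) (t t' : BTree) (hsz : t.size = t'.size)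
    (hsat : Satisfies (gaOp E) t t') {L : ℕ} {p : ℕ → V}
    (hL : t.height ≤ L)
    (hedge : ∀ i < L, E (p i) (p (i + 1)))
    (hpl : IsPleasant E L p) :
    ∀ i < t'.size, t'.depth i ≤ t.depth i := by
  -- reachability along the walk
  have hreach : ∀ d e, d ≤ e → e ≤ L → Reach E (p d) (p e) := by
    intro d e hde heL
    induction e, hde using Nat.le_induction with
    | base => exact Relation.ReflTransGen.refl
    | succ n hdn ih =>
      exact Relation.ReflTransGen.tail (ih (by omega)) (hedge n (by omega))
  -- edges among walk vertices go strictly forward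
  have hforward : ∀ d e, d ≤ L → e ≤ L → E (p d) (p e) → d < e := by
    intro d e hd he hE
    by_contra hcon
    push_neg at hcon
    exact hpl d hd ⟨p e, hE, hreach e d hcon hd⟩
  -- the assignment
  set f : ℕ → Option V := fun i => some (p (t.depth i)) with hf
  have ht : BTree.termOp (gaOp E) t f = some (p 0) := by
    rw [BTree.termOp, hf, eval_gaOp, if_pos, depth_zero]
    intro e he
    obtain ⟨i, j, ha, hb, hi, hj, hd⟩ := mem_edgesFrom he
    simp only [Nat.zero_add] at ha hb
    subst ha; subst hb
    rw [hd]
    exact hedge _ (by have := depth_le_height hj; omega)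
  have ht' : BTree.termOp (gaOp E) t' f = some (p 0) := by rw [← hsat f]; exact ht
  rw [BTree.termOp, hf, eval_gaOp] at ht'
  have hcond : ∀ e ∈ t'.edgesFrom 0, E (p (t.depth e.1)) (p (t.depth e.2)) := by
    by_contra hc
    rw [if_neg hc] at ht'
    cases ht'
  have hg : ∀ e ∈ t'.edgesFrom 0, t.depth e.1 < t.depth e.2 := by
    intro e he
    obtain ⟨i, j, ha, hb, hi, hj, _⟩ := mem_edgesFrom he
    simp only [Nat.zero_add] at ha hb
    apply hforward _ _ (le_trans (depth_le_height (by rw [ha, hsz]; exact hi)) hL)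
      (le_trans (depth_le_height (by rw [hb, hsz]; exact hj)) hL) (hcond e he)
  intro i hi
  have := depth_le_of_incr hg i hi
  rw [Nat.zero_add, depth_zero, Nat.zero_add] at this
  exact this

theorem aux_eq {V : Type*} (E : V → V → Prop) (t t' : BTree) (hsz : t.size = t'.size)
    (hsat : Satisfies (gaOp E) t t') {L : ℕ} {p : ℕ → V}
    (hL : t.height ≤ L)
    (hedge : ∀ i < L, E (p i) (p (i + 1)))
    (hpl : IsPleasant E L p) : t = t' := by
  have hsat' : Satisfies (gaOp E) t' t := fun f => (hsat f).symm
  have le1 : ∀ i < t'.size, t'.depth i ≤ t.depth i := key E t t' hsz hsat hL hedge hpl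
  have hh : t'.height ≤ t.height := by
    obtain ⟨i, hi, hdi⟩ := exists_depth_eq_height t'
    rw [← hdi]
    exact le_trans (le1 i hi) (depth_le_height (by rw [hsz]; exact hi))
  have le2 : ∀ i < t.size, t.depth i ≤ t'.depth i :=
    key E t' t hsz.symm hsat' (le_trans hh hL) hedge hpl
  apply depths_inj
  apply List.ext_getElem (by rw [length_depths, length_depths, hsz])
  intro n h1 h2
  rw [length_depths] at h1 h2
  have e1 : t.depths[n] = t.depth n := (List.getD_eq_getElem _ _ (by rwa [length_depths])).symm
  have e2 : t'.depths[n] = t'.depth n := (List.getD_eq_getElem _ _ (by rwa [length_depths])).symm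
  rw [e1, e2]
  exact le_antisymm (le2 n h1) (le1 n (by rwa [← hsz]))

end AssocSpecAux


open AssocSpec in
/-- If the graph algebra of a digraph `G` satisfies a
nontrivial bracketing identity `t ≈ t'`, then `G` has no pleasant path of
length `H(t,t') = min (h(G(t)), h(G(t')))`. -/
theorem stmt17 {V : Type*} [Nonempty V] (E : V → V → Prop)
    (t t' : BTree) (hsz : t.size = t'.size) (hne : t ≠ t')
    (hsat : Satisfies (gaOp E) t t') :
    ¬ ∃ p : ℕ → V, IsPath E (min t.height t'.height) p ∧
      IsPleasant E (min t.height t'.height) p := by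
  rintro ⟨p, hpath, hpl⟩
  rcases le_total t.height t'.height with hh | hh
  · exact hne (AssocSpecAux.aux_eq E t t' hsz hsat (le_of_eq (min_eq_left hh).symm)
      hpath.1 hpl)
  · exact hne (AssocSpecAux.aux_eq E t' t hsz.symm (fun f => (hsat f).symm)
      (le_of_eq (min_eq_right hh).symm) hpath.1 hpl).symm
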